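/- Theorem 3.4 (lower complexity bound for randomized incremental gradient methods): Let m ≥ 1, ñ ≥ 1, n = m·ñ, μ > 0, 𝒬 > 1, q = (√𝒬 − 1)/(√𝒬 + 1). Consider Ψ(x) = Σ_{i=1}^m [f_i(x_i) + (μ/2)‖x_i‖₂²] over x = (x_1, …, x_m) ∈ (ℝ^ñ)^m, with f_i(x_i) = (μ(𝒬−1)/4)·[½⟨A x_i, x_i⟩ − ⟨e₁, x_i⟩], A the tridiagonal matrix of (3.36) and x* its unique minimizer. Let i_1, i_2, … be independent random variables with values in {1, …, m} and P(i_t = i) = p_i (Σ p_i = 1, p_i ≥ 0), and let x^0 = 0 and x^k (k ≥ 1) be any random sequence adapted to i_1, …, i_k with x^k ∈ Lin{∇f_{i_1}(x^0), ∇f_{i_2}(x^1), …, ∇f_{i_k}(x^{k-1})} (each ∇f_{i_t} acting on the i_t-th block). Then for every k ≥ 1 and every choice of (p_i), if ñ ≥ log([1 − (1 − q²)/m]^k / 2) / (2·log q), one has E[‖x^k − x*‖₂²] / ‖x^0 − x*‖₂² ≥ ½·exp(−4k√𝒬 / (m(√𝒬+1)² − 4√𝒬)). -/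

import Mathlib

open scoped RealInnerProductSpace
open InnerProductSpace

section Aux

lemma aux_hasGradientAt_quad {n : ℕ} (c : ℝ)
    (L : EuclideanSpace ℝ (Fin n) →ₗ[ℝ] EuclideanSpace ℝ (Fin n))
    (hsym : ∀ u w : EuclideanSpace ℝ (Fin n), ⟪L u, w⟫ = ⟪u, L w⟫)
    (b v : EuclideanSpace ℝ (Fin n)) :
    HasGradientAt (fun w => c * ((1/2 : ℝ) * ⟪L w, w⟫ - ⟪b, w⟫))
      (c • (L v - b)) v := by
  classical
  let Lc : EuclideanSpace ℝ (Fin n) →L[ℝ] EuclideanSpace ℝ (Fin n) :=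
    LinearMap.toContinuousLinearMap L
  have h1 : HasFDerivAt (fun w : EuclideanSpace ℝ (Fin n) => ⟪Lc w, w⟫)
      ((fderivInnerCLM ℝ (Lc v, v)).comp (Lc.prod (ContinuousLinearMap.id ℝ _))) v :=
    HasFDerivAt.inner (𝕜 := ℝ) (Lc.hasFDerivAt) (hasFDerivAt_id v)
  have h2 : HasFDerivAt (fun w : EuclideanSpace ℝ (Fin n) => ⟪b, w⟫) (innerSL ℝ b) v :=
    (innerSL ℝ b).hasFDerivAt
  have h3 := ((h1.const_mul (1/2 : ℝ)).sub h2).const_mul c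
  rw [hasGradientAt_iff_hasFDerivAt]
  have hD : (toDual ℝ (EuclideanSpace ℝ (Fin n))) (c • (L v - b)) =
      c • ((1/2 : ℝ) • ((fderivInnerCLM ℝ (Lc v, v)).comp
        (Lc.prod (ContinuousLinearMap.id ℝ _))) - innerSL ℝ b) := by
    ext h
    have hLc : ∀ w, Lc w = L w := fun w => rfl
    have h4 : ⟪L h, v⟫ = ⟪L v, h⟫ := by rw [hsym, real_inner_comm]
    simp only [toDual_apply_apply, ContinuousLinearMap.smul_apply, ContinuousLinearMap.sub_apply,
      ContinuousLinearMap.comp_apply, ContinuousLinearMap.prod_apply,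
      ContinuousLinearMap.id_apply, fderivInnerCLM_apply, innerSL_apply_apply, hLc,
      inner_smul_left, inner_sub_left, RCLike.conj_to_real, smul_eq_mul]
    rw [h4]
    ring
  rw [hD]
  exact h3

lemma aux_coord {n : ℕ} (A : Matrix (Fin n) (Fin n) ℝ) (v : EuclideanSpace ℝ (Fin n))
    (j : Fin n) : Matrix.toEuclideanLin A v j = ∑ l, A j l * v l := rfl

lemma aux_sym {n : ℕ} (A : Matrix (Fin n) (Fin n) ℝ) (hAs : ∀ i j, A i j = A j i)
    (u w : EuclideanSpace ℝ (Fin n)) :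
    ⟪Matrix.toEuclideanLin A u, w⟫ = ⟪u, Matrix.toEuclideanLin A w⟫ := by
  simp only [PiLp.inner_apply, RCLike.inner_apply, conj_trivial, aux_coord,
    Finset.sum_mul, Finset.mul_sum]
  conv_rhs => rw [Finset.sum_comm]
  refine Finset.sum_congr rfl fun j _ => Finset.sum_congr rfl fun l _ => ?_
  rw [hAs j l]; ring

lemma aux_sum_prod {k m : ℕ} (g : Fin k → Fin m → ℝ) :
    (∑ s : Fin k → Fin m, ∏ t, g t (s t)) = ∏ t, ∑ j, g t j := by
  classical
  have h := Finset.prod_univ_sum (fun _ : Fin k => (Finset.univ : Finset (Fin m)))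
    (fun t j => g t j)
  rw [Fintype.piFinset_univ] at h
  exact h.symm

/-- number of times index `i` has been sampled strictly before time `t` -/
def auxCnt {k m : ℕ} (s : Fin k → Fin m) (t : ℕ) (i : Fin m) : ℕ :=
  (Finset.univ.filter (fun r : Fin k => (r : ℕ) < t ∧ s r = i)).card

lemma auxCnt_succ_le {k m : ℕ} (s : Fin k → Fin m) (r t : ℕ) (hr1 : 1 ≤ r) (hrt : r ≤ t)
    (hrk : r - 1 < k) (i : Fin m) (hi : s ⟨r - 1, hrk⟩ = i) :
    auxCnt s (r - 1) i + 1 ≤ auxCnt s t i := by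
  classical
  unfold auxCnt
  set e : Fin k := ⟨r - 1, hrk⟩ with he
  have hnot : e ∉ Finset.univ.filter (fun r' : Fin k => (r' : ℕ) < r - 1 ∧ s r' = i) := by
    simp [he]
  have hsub : insert e (Finset.univ.filter (fun r' : Fin k => (r' : ℕ) < r - 1 ∧ s r' = i))
      ⊆ Finset.univ.filter (fun r' : Fin k => (r' : ℕ) < t ∧ s r' = i) := by
    intro a ha
    rcases Finset.mem_insert.mp ha with h | h
    · subst h
      simp only [Finset.mem_filter, Finset.mem_univ, true_and, he]
      exact ⟨by omega, hi⟩
    · simp only [Finset.mem_filter, Finset.mem_univ, true_and] at h ⊢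
      exact ⟨by omega, h.2⟩
  calc (Finset.univ.filter (fun r' : Fin k => (r' : ℕ) < r - 1 ∧ s r' = i)).card + 1
      = (insert e (Finset.univ.filter (fun r' : Fin k => (r' : ℕ) < r - 1 ∧ s r' = i))).card := by
        rw [Finset.card_insert_of_notMem hnot]
    _ ≤ _ := Finset.card_le_card hsub

lemma auxCnt_top {k m : ℕ} (s : Fin k → Fin m) (i : Fin m) :
    auxCnt s k i = (Finset.univ.filter (fun r : Fin k => s r = i)).card := by
  unfold auxCnt
  congr 1
  apply Finset.filter_congr
  intro r _
  simp [r.isLt]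

end Aux

set_option maxHeartbeats 2000000 in
theorem rig_lower_complexity_bound
    (m ntil k : ℕ) (hm : 1 ≤ m) (hn : 1 ≤ ntil) (hk : 1 ≤ k)
    (μ Q : ℝ) (hμ : 0 < μ) (hQ : 1 < Q)
    (q κ : ℝ)
    (hq : q = (Real.sqrt Q - 1) / (Real.sqrt Q + 1))
    (hκ : κ = (Real.sqrt Q + 3) / (Real.sqrt Q + 1))
    (A : Matrix (Fin ntil) (Fin ntil) ℝ)
    (hA : ∀ i j : Fin ntil, A i j =
      if i = j then (if (i : ℕ) = ntil - 1 then κ else 2)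
      else if (i : ℕ) + 1 = (j : ℕ) ∨ (j : ℕ) + 1 = (i : ℕ) then -1 else 0)
    (e1 : EuclideanSpace ℝ (Fin ntil))
    (he1 : ∀ j : Fin ntil, e1 j = if (j : ℕ) = 0 then 1 else 0)
    (f : EuclideanSpace ℝ (Fin ntil) → ℝ)
    (hf : ∀ v, f v = μ * (Q - 1) / 4 *
      ((1 / 2) * ⟪Matrix.toEuclideanLin A v, v⟫ - ⟪e1, v⟫))
    (f' : EuclideanSpace ℝ (Fin ntil) → EuclideanSpace ℝ (Fin ntil))
    (hf' : ∀ v, HasGradientAt f (f' v) v)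
    (xstar : Fin m → EuclideanSpace ℝ (Fin ntil))
    (hxstar : ∀ i j, xstar i j = q ^ ((j : ℕ) + 1))
    (p : Fin m → ℝ) (hp0 : ∀ i, 0 ≤ p i) (hp1 : ∑ i, p i = 1)
    (x : (Fin k → Fin m) → ℕ → Fin m → EuclideanSpace ℝ (Fin ntil))
    (hx0 : ∀ s, x s 0 = 0)
    (hspan : ∀ s : Fin k → Fin m, ∀ t : ℕ, ∀ (ht1 : 1 ≤ t) (ht2 : t ≤ k),
      x s t ∈ Submodule.span ℝ
        {v : Fin m → EuclideanSpace ℝ (Fin ntil) |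
          ∃ r : ℕ, ∃ (hr1 : 1 ≤ r) (hr2 : r ≤ t),
            v = fun j => if j = s ⟨r - 1, by omega⟩
              then f' (x s (r - 1) (s ⟨r - 1, by omega⟩)) else 0})
    (hdim : Real.log ((1 - (1 - q ^ 2) / m) ^ k / 2) / (2 * Real.log q) ≤ (ntil : ℝ)) :
    (1 / 2) * Real.exp (-(4 * k * Real.sqrt Q) /
        (m * (Real.sqrt Q + 1) ^ 2 - 4 * Real.sqrt Q))
      ≤ (∑ s : Fin k → Fin m, (∏ t, p (s t)) * ∑ i, ‖x s k i - xstar i‖ ^ 2)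
          / (∑ i, ‖xstar i‖ ^ 2) := by
  classical
  have hQ0 : (0:ℝ) < Q := lt_trans one_pos hQ
  set s1 : ℝ := Real.sqrt Q with hs1
  have hs1sq : s1 ^ 2 = Q := Real.sq_sqrt hQ0.le
  have hs1nn : 0 ≤ s1 := Real.sqrt_nonneg Q
  have hs11 : 1 < s1 := by nlinarith
  have hq0 : 0 < q := by rw [hq]; exact div_pos (by linarith) (by linarith)
  have hq1 : q < 1 := by rw [hq, div_lt_one (by linarith)]; linarith
  have hm' : (1:ℝ) ≤ (m:ℝ) := by exact_mod_cast hm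
  have h1q2 : 1 - q ^ 2 = 4 * s1 / (s1 + 1) ^ 2 := by
    rw [hq]
    field_simp
    ring
  -- abbreviations
  set t2 : ℝ := q ^ 2 with ht2
  have ht2pos : 0 < t2 := by rw [ht2]; positivity
  have ht2lt : t2 < 1 := by nlinarith
  set ρ : ℝ := 1 - (1 - t2) / m with hρ
  have hρpos : 0 < ρ := by
    have : (1 - t2) / m ≤ 1 - t2 := by
      apply div_le_self (by linarith) hm'
    rw [hρ]; linarith
  have hρle1 : ρ ≤ 1 := by
    have : 0 ≤ (1 - t2) / m := div_nonneg (by linarith) (by linarith)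
    rw [hρ]; linarith
  -- symmetry of A
  have hAs : ∀ i j, A i j = A j i := by
    intro i j
    rw [hA, hA]
    by_cases h : i = j
    · subst h; rfl
    · have h' : ¬ j = i := fun e => h e.symm
      simp [h, h', or_comm]
  -- gradient formula
  have hgrad : ∀ v, f' v = (μ * (Q - 1) / 4) • (Matrix.toEuclideanLin A v - e1) := by
    intro v
    have h1 : HasGradientAt f ((μ * (Q - 1) / 4) • (Matrix.toEuclideanLin A v - e1)) v := by
      have h2 := aux_hasGradientAt_quad (μ * (Q - 1) / 4) (Matrix.toEuclideanLin A)
        (aux_sym A hAs) e1 v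
      have hfe : f = fun w => μ * (Q - 1) / 4 *
          ((1/2 : ℝ) * ⟪Matrix.toEuclideanLin A w, w⟫ - ⟪e1, w⟫) := by
        funext w; rw [hf w]
      rw [hfe]
      exact h2
    have h3 := (hasGradientAt_iff_hasFDerivAt.mp (hf' v)).unique
      (hasGradientAt_iff_hasFDerivAt.mp h1)
    exact (toDual ℝ (EuclideanSpace ℝ (Fin ntil))).injective h3
  -- support propagation through the gradient
  have hf'supp : ∀ (v : EuclideanSpace ℝ (Fin ntil)) (a : ℕ),
      (∀ j : Fin ntil, a ≤ (j : ℕ) → v j = 0) →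
      ∀ j : Fin ntil, a + 1 ≤ (j : ℕ) → f' v j = 0 := by
    intro v a hv j hj
    rw [hgrad]
    have he : e1 j = 0 := by rw [he1, if_neg (by omega)]
    have hLv : Matrix.toEuclideanLin A v j = 0 := by
      rw [aux_coord]
      apply Finset.sum_eq_zero
      intro l _
      by_cases hl : a ≤ (l : ℕ)
      · rw [hv l hl, mul_zero]
      · have h1 : ¬ j = l := by
          intro e; rw [e] at hj; omega
        have h2 : ¬ ((j : ℕ) + 1 = (l : ℕ) ∨ (l : ℕ) + 1 = (j : ℕ)) := by omega
        rw [hA, if_neg h1, if_neg h2, zero_mul]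
    simp [PiLp.smul_apply, PiLp.sub_apply, hLv, he]
  -- main support induction
  have hsupp : ∀ t, t ≤ k → ∀ (s : Fin k → Fin m) (i : Fin m) (j : Fin ntil),
      auxCnt s t i ≤ (j : ℕ) → x s t i j = 0 := by
    intro t
    induction t using Nat.strong_induction_on with
    | _ t ih =>
      intro htk s i j hj
      rcases Nat.eq_zero_or_pos t with h0 | h1
      · subst h0; rw [hx0]; rfl
      · have hmem := hspan s t h1 htk
        refine Submodule.span_induction
          (p := fun y _ => ∀ (i' : Fin m) (j' : Fin ntil),
            auxCnt s t i' ≤ (j' : ℕ) → y i' j' = 0)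
          ?_ ?_ ?_ ?_ hmem i j hj
        · rintro v ⟨r, hr1, hr2, hv⟩
          intro i' j' hj'
          rw [hv]
          beta_reduce
          split_ifs with hi
          · have hrk : r - 1 < k := by omega
            have hj2 : auxCnt s t (s ⟨r - 1, hrk⟩) ≤ (j' : ℕ) := by
              rw [hi] at hj'; exact hj'
            have hcnt : auxCnt s (r - 1) (s ⟨r - 1, hrk⟩) + 1 ≤ auxCnt s t (s ⟨r - 1, hrk⟩) :=
              auxCnt_succ_le s r t hr1 hr2 hrk (s ⟨r - 1, hrk⟩) rfl
            exact hf'supp _ _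
              (fun j'' hj'' => ih (r - 1) (by omega) (by omega) s (s ⟨r - 1, hrk⟩) j'' hj'')
              j' (by omega)
          · rfl
        · intro i' j' _; rfl
        · intro y z _ _ hy hz i' j' h
          have h1 := hy i' j' h
          have h2 := hz i' j' h
          show (y i' + z i') j' = 0
          rw [PiLp.add_apply, h1, h2, add_zero]
        · intro a y _ hy i' j' h
          have h1 := hy i' j' h
          show (a • y i') j' = 0
          rw [PiLp.smul_apply, h1, smul_zero]
  -- geometric sums
  have hpows : ∀ b : ℕ, (q ^ b) ^ 2 = t2 ^ b := by
    intro b; rw [← pow_mul, ← pow_mul, mul_comm]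
  have hfilter_range : ∀ a : ℕ,
      Finset.filter (fun j => a ≤ j) (Finset.range ntil) = Finset.Ico a ntil := by
    intro a; ext j; simp [Finset.mem_Ico, and_comm]
  have hsum_eq : ∀ a : ℕ,
      (∑ j ∈ Finset.univ.filter (fun j : Fin ntil => a ≤ (j : ℕ)), (q ^ ((j : ℕ) + 1)) ^ 2)
        = ∑ j ∈ Finset.Ico a ntil, t2 ^ (j + 1) := by
    intro a
    rw [Finset.sum_filter]
    rw [Fin.sum_univ_eq_sum_range (fun j => if a ≤ j then (q ^ (j + 1)) ^ 2 else 0) ntil]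
    rw [← Finset.sum_filter, hfilter_range]
    exact Finset.sum_congr rfl fun j _ => hpows (j + 1)
  have hgeomEq : ∀ a : ℕ, a ≤ ntil →
      (∑ j ∈ Finset.Ico a ntil, t2 ^ (j + 1)) = t2 / (1 - t2) * (t2 ^ a - t2 ^ ntil) := by
    intro a ha
    have h1 : ∀ j : ℕ, t2 ^ (j + 1) = t2 * t2 ^ j := fun j => by ring
    rw [Finset.sum_congr rfl fun j _ => h1 j, ← Finset.mul_sum,
      geom_sum_Ico' (by linarith : t2 ≠ 1) ha]
    field_simp
  have hgeom : ∀ a : ℕ,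
      t2 / (1 - t2) * (t2 ^ a - t2 ^ ntil)
        ≤ ∑ j ∈ Finset.univ.filter (fun j : Fin ntil => a ≤ (j : ℕ)), (q ^ ((j : ℕ) + 1)) ^ 2 := by
    intro a
    rw [hsum_eq]
    rcases le_or_gt a ntil with ha | ha
    · rw [hgeomEq a ha]
    · rw [Finset.Ico_eq_empty (by omega), Finset.sum_empty]
      have h1 : t2 ^ a ≤ t2 ^ ntil := pow_le_pow_of_le_one ht2pos.le ht2lt.le (by omega)
      have h2 : 0 ≤ t2 / (1 - t2) := div_nonneg ht2pos.le (by linarith)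
      nlinarith
  -- lower bound for each squared distance
  have hnormlb : ∀ (s : Fin k → Fin m) (i : Fin m),
      t2 / (1 - t2) * (t2 ^ (auxCnt s k i) - t2 ^ ntil) ≤ ‖x s k i - xstar i‖ ^ 2 := by
    intro s i
    refine le_trans (hgeom (auxCnt s k i)) ?_
    have hns : ‖x s k i - xstar i‖ ^ 2
        = ∑ j : Fin ntil, (x s k i j - xstar i j) ^ 2 := by
      rw [← real_inner_self_eq_norm_sq, PiLp.inner_apply]
      exact Finset.sum_congr rfl fun j _ => by
        simp [RCLike.inner_apply, PiLp.sub_apply, pow_two]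
    rw [hns]
    refine le_trans (le_of_eq ?_)
      (Finset.sum_le_sum_of_subset_of_nonneg
        (Finset.filter_subset (fun j : Fin ntil => auxCnt s k i ≤ (j : ℕ)) Finset.univ)
        (fun j _ _ => sq_nonneg _))
    refine Finset.sum_congr rfl fun j hjmem => ?_
    have hj : auxCnt s k i ≤ (j : ℕ) := (Finset.mem_filter.mp hjmem).2
    rw [hsupp k le_rfl s i j hj, hxstar, zero_sub, neg_sq]
  -- the denominator
  have hden : (∑ i, ‖xstar i‖ ^ 2) = m * (t2 / (1 - t2) * (1 - t2 ^ ntil)) := by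
    have h1 : ∀ i : Fin m, ‖xstar i‖ ^ 2 = t2 / (1 - t2) * (1 - t2 ^ ntil) := by
      intro i
      have hns : ‖xstar i‖ ^ 2 = ∑ j : Fin ntil, (q ^ ((j : ℕ) + 1)) ^ 2 := by
        rw [← real_inner_self_eq_norm_sq, PiLp.inner_apply]
        exact Finset.sum_congr rfl fun j _ => by
          simp [RCLike.inner_apply, hxstar, pow_two, abs_of_pos hq0]
      rw [hns]
      have h2 : Finset.univ.filter (fun j : Fin ntil => 0 ≤ (j : ℕ)) = Finset.univ := by
        apply Finset.filter_true_of_mem; intro j _; omega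
      rw [← h2, hsum_eq 0, hgeomEq 0 (by omega), pow_zero]
    rw [Finset.sum_congr rfl fun i _ => h1 i, Finset.sum_const, Finset.card_univ,
      Fintype.card_fin, nsmul_eq_mul]
  -- expectation identities
  have hwsum : (∑ s : Fin k → Fin m, ∏ t, p (s t)) = 1 := by
    have h := aux_sum_prod (fun _ : Fin k => fun j : Fin m => p j)
    simpa [hp1] using h
  have hw0 : ∀ s : Fin k → Fin m, 0 ≤ ∏ t, p (s t) :=
    fun s => Finset.prod_nonneg fun t _ => hp0 _
  have hmgf : ∀ i : Fin m, (∑ s : Fin k → Fin m, (∏ t, p (s t)) * t2 ^ (auxCnt s k i))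
      = (1 - p i * (1 - t2)) ^ k := by
    intro i
    have h1 : ∀ s : Fin k → Fin m, (∏ t, p (s t)) * t2 ^ (auxCnt s k i)
        = ∏ t, (p (s t) * (if s t = i then t2 else 1)) := by
      intro s
      rw [Finset.prod_mul_distrib]
      congr 1
      rw [auxCnt_top, ← Finset.prod_const, Finset.prod_filter]
    rw [Finset.sum_congr rfl fun s _ => h1 s,
      aux_sum_prod (fun _ : Fin k => fun j : Fin m => p j * (if j = i then t2 else 1))]
    have h2 : ∀ t : Fin k, (∑ j, p j * (if j = i then t2 else 1)) = 1 - p i * (1 - t2) := by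
      intro t
      have h3 : ∀ j, p j * (if j = i then t2 else 1)
          = p j + (if j = i then p i * (t2 - 1) else 0) := by
        intro j
        by_cases h : j = i
        · subst h; simp; ring
        · simp [h]
      rw [Finset.sum_congr rfl fun j _ => h3 j, Finset.sum_add_distrib, hp1,
        Finset.sum_ite_eq' Finset.univ i (fun _ => p i * (t2 - 1))]
      simp; ring
    rw [Finset.prod_congr rfl fun t _ => h2 t, Finset.prod_const, Finset.card_univ,
      Fintype.card_fin]
  -- p i ≤ 1
  have hpile : ∀ i, p i ≤ 1 := by
    intro i
    rw [← hp1]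
    exact Finset.single_le_sum (fun j _ => hp0 j) (Finset.mem_univ i)
  -- Jensen
  have hjensen : (m : ℝ) * ρ ^ k ≤ ∑ i, (1 - p i * (1 - t2)) ^ k := by
    have hz : ∀ i ∈ Finset.univ, (0:ℝ) ≤ 1 - p i * (1 - t2) := by
      intro i _
      nlinarith [hp0 i, hpile i]
    have hw : ∀ i ∈ Finset.univ, (0:ℝ) ≤ (fun _ : Fin m => 1 / (m:ℝ)) i := by
      intro i _; positivity
    have hw' : (∑ _i : Fin m, 1 / (m:ℝ)) = 1 := by
      rw [Finset.sum_const, Finset.card_univ, Fintype.card_fin, nsmul_eq_mul]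
      field_simp
    have := Real.pow_arith_mean_le_arith_mean_pow Finset.univ (fun _ : Fin m => 1 / (m:ℝ))
      (fun i => 1 - p i * (1 - t2)) hw hw' hz k
    have hmean : (∑ i : Fin m, 1 / (m:ℝ) * (1 - p i * (1 - t2))) = ρ := by
      have e2 : ∀ i : Fin m, 1 / (m:ℝ) * (1 - p i * (1 - t2))
          = 1 / (m:ℝ) - (1 / (m:ℝ) * (1 - t2)) * p i := fun i => by ring
      rw [Finset.sum_congr rfl fun i _ => e2 i, Finset.sum_sub_distrib, ← Finset.mul_sum,
        hp1, Finset.sum_const, Finset.card_univ, Fintype.card_fin, nsmul_eq_mul, mul_one, hρ]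
      have hm0 : (m:ℝ) ≠ 0 := by linarith
      field_simp
    rw [hmean] at this
    have h4 : (∑ i : Fin m, 1 / (m:ℝ) * (1 - p i * (1 - t2)) ^ k)
        = 1 / (m:ℝ) * ∑ i, (1 - p i * (1 - t2)) ^ k := by
      rw [Finset.mul_sum]
    rw [h4] at this
    have hm0 : (0:ℝ) < m := by linarith
    calc (m : ℝ) * ρ ^ k ≤ (m : ℝ) * (1 / (m:ℝ) * ∑ i, (1 - p i * (1 - t2)) ^ k) :=
          mul_le_mul_of_nonneg_left this (by positivity)
      _ = ∑ i, (1 - p i * (1 - t2)) ^ k := by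
          rw [← mul_assoc, mul_one_div, div_self (ne_of_gt hm0), one_mul]
  -- dimension condition
  have hq2n : t2 ^ ntil ≤ ρ ^ k / 2 := by
    have hlogq : Real.log q < 0 := Real.log_neg hq0 hq1
    have h1 : (ntil : ℝ) * (2 * Real.log q) ≤ Real.log (ρ ^ k / 2) := by
      rw [div_le_iff_of_neg (by linarith)] at hdim
      exact hdim
    have h2 : Real.log (t2 ^ ntil) = (ntil : ℝ) * (2 * Real.log q) := by
      rw [Real.log_pow, ht2, Real.log_pow]
      push_cast; ring
    have hpos1 : (0:ℝ) < t2 ^ ntil := pow_pos ht2pos ntil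
    have hpos2 : (0:ℝ) < ρ ^ k / 2 := div_pos (pow_pos hρpos k) two_pos
    rw [← Real.log_le_log_iff hpos1 hpos2, h2]
    exact h1
  -- exponential bound
  have hD2 : (0:ℝ) < m * (s1 + 1) ^ 2 - 4 * s1 := by nlinarith
  have hρeq : ρ = (m * (s1 + 1) ^ 2 - 4 * s1) / (m * (s1 + 1) ^ 2) := by
    have hm0 : (m:ℝ) ≠ 0 := by linarith
    have hs10 : s1 + 1 ≠ 0 := by linarith
    rw [hρ, h1q2]
    field_simp
  have hexp : Real.exp (-(4 * (k:ℝ) * s1) / (m * (s1 + 1) ^ 2 - 4 * s1)) ≤ ρ ^ k := by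
    have hinv : 1 - ρ⁻¹ = -(4 * s1) / (m * (s1 + 1) ^ 2 - 4 * s1) := by
      have hD2' : m * (s1 + 1) ^ 2 - 4 * s1 ≠ 0 := ne_of_gt hD2
      rw [hρeq, inv_div]
      field_simp
      rw [one_sub_div (by intro h; linarith)]
      ring
    have hlog := Real.one_sub_inv_le_log_of_pos hρpos
    rw [hinv] at hlog
    have h1 : -(4 * (k:ℝ) * s1) / (m * (s1 + 1) ^ 2 - 4 * s1)
        = (k : ℝ) * (-(4 * s1) / (m * (s1 + 1) ^ 2 - 4 * s1)) := by ring
    rw [h1]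
    have h2 : (k : ℝ) * (-(4 * s1) / (m * (s1 + 1) ^ 2 - 4 * s1))
        ≤ (k : ℝ) * Real.log ρ :=
      mul_le_mul_of_nonneg_left hlog (by positivity)
    calc Real.exp ((k : ℝ) * (-(4 * s1) / (m * (s1 + 1) ^ 2 - 4 * s1)))
        ≤ Real.exp ((k : ℝ) * Real.log ρ) := Real.exp_le_exp.mpr h2
      _ = ρ ^ k := by rw [Real.exp_nat_mul, Real.exp_log hρpos]
  -- final assembly
  set C : ℝ := t2 / (1 - t2) with hC
  have hCpos : 0 < C := by rw [hC]; exact div_pos ht2pos (by linarith)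
  have hq2n0 : (0:ℝ) ≤ t2 ^ ntil := pow_nonneg ht2pos.le ntil
  have ht2n1 : t2 ^ ntil < 1 := pow_lt_one₀ ht2pos.le ht2lt (by omega)
  have hDpos : (0:ℝ) < ∑ i, ‖xstar i‖ ^ 2 := by
    rw [hden]
    have hm0 : (0:ℝ) < m := by linarith
    exact mul_pos hm0 (mul_pos hCpos (by linarith))
  rw [le_div_iff₀ hDpos]
  -- numerator lower bound
  have hN1 : (m : ℝ) * C * (ρ ^ k - t2 ^ ntil)
      ≤ ∑ s : Fin k → Fin m, (∏ t, p (s t)) * ∑ i, ‖x s k i - xstar i‖ ^ 2 := by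
    have step1 : (∑ s : Fin k → Fin m, (∏ t, p (s t)) *
        ∑ i, C * (t2 ^ (auxCnt s k i) - t2 ^ ntil))
        ≤ ∑ s : Fin k → Fin m, (∏ t, p (s t)) * ∑ i, ‖x s k i - xstar i‖ ^ 2 := by
      apply Finset.sum_le_sum
      intro s _
      apply mul_le_mul_of_nonneg_left _ (hw0 s)
      apply Finset.sum_le_sum
      intro i _
      exact hnormlb s i
    refine le_trans ?_ step1
    have swap : (∑ s : Fin k → Fin m, (∏ t, p (s t)) *
        ∑ i, C * (t2 ^ (auxCnt s k i) - t2 ^ ntil))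
        = ∑ i : Fin m, ∑ s : Fin k → Fin m, (∏ t, p (s t)) *
          (C * (t2 ^ (auxCnt s k i) - t2 ^ ntil)) := by
      rw [Finset.sum_comm]
      exact Finset.sum_congr rfl fun s _ => by rw [Finset.mul_sum]
    rw [swap]
    have inner : ∀ i : Fin m, (∑ s : Fin k → Fin m, (∏ t, p (s t)) *
        (C * (t2 ^ (auxCnt s k i) - t2 ^ ntil)))
        = C * ((1 - p i * (1 - t2)) ^ k - t2 ^ ntil) := by
      intro i
      have h5 : ∀ s : Fin k → Fin m, (∏ t, p (s t)) *
          (C * (t2 ^ (auxCnt s k i) - t2 ^ ntil))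
          = C * ((∏ t, p (s t)) * t2 ^ (auxCnt s k i))
            - (C * t2 ^ ntil) * (∏ t, p (s t)) := fun s => by ring
      rw [Finset.sum_congr rfl fun s _ => h5 s, Finset.sum_sub_distrib,
        ← Finset.mul_sum, ← Finset.mul_sum, hmgf i, hwsum, mul_one]
      ring
    rw [Finset.sum_congr rfl fun i _ => inner i]
    have hsplit : (∑ i : Fin m, C * ((1 - p i * (1 - t2)) ^ k - t2 ^ ntil))
        = C * ((∑ i, (1 - p i * (1 - t2)) ^ k) - (m:ℝ) * t2 ^ ntil) := by
      rw [← Finset.mul_sum, Finset.sum_sub_distrib, Finset.sum_const, Finset.card_univ,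
        Fintype.card_fin, nsmul_eq_mul]
    rw [hsplit]
    have hle : (m:ℝ) * ρ ^ k - (m:ℝ) * t2 ^ ntil
        ≤ (∑ i, (1 - p i * (1 - t2)) ^ k) - (m:ℝ) * t2 ^ ntil := by
      linarith [hjensen]
    calc (m:ℝ) * C * (ρ ^ k - t2 ^ ntil)
        = C * ((m:ℝ) * ρ ^ k - (m:ℝ) * t2 ^ ntil) := by ring
      _ ≤ C * ((∑ i, (1 - p i * (1 - t2)) ^ k) - (m:ℝ) * t2 ^ ntil) :=
          mul_le_mul_of_nonneg_left hle hCpos.le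
  -- put everything together
  have hρk1 : ρ ^ k ≤ 1 := pow_le_one₀ hρpos.le hρle1
  have hexp0 : 0 ≤ Real.exp (-(4 * (k:ℝ) * s1) / (m * (s1 + 1) ^ 2 - 4 * s1)) :=
    (Real.exp_pos _).le
  have key : (1/2) * Real.exp (-(4 * (k:ℝ) * s1) / (m * (s1 + 1) ^ 2 - 4 * s1))
      * (1 - t2 ^ ntil) ≤ ρ ^ k - t2 ^ ntil := by
    nlinarith [mul_le_mul_of_nonneg_right hexp (by linarith : (0:ℝ) ≤ 1 - t2 ^ ntil),
      mul_nonneg (pow_nonneg hρpos.le k) hq2n0]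
  calc (1/2) * Real.exp (-(4 * (k:ℝ) * s1) / (m * (s1 + 1) ^ 2 - 4 * s1))
      * (∑ i, ‖xstar i‖ ^ 2)
      = ((m:ℝ) * C) * ((1/2) * Real.exp (-(4 * (k:ℝ) * s1) /
          (m * (s1 + 1) ^ 2 - 4 * s1)) * (1 - t2 ^ ntil)) := by
        rw [hden]; ring
    _ ≤ ((m:ℝ) * C) * (ρ ^ k - t2 ^ ntil) :=
        mul_le_mul_of_nonneg_left key (mul_nonneg (by linarith) hCpos.le)
    _ ≤ _ := hN1
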